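/- arXiv:1711.04287 — 3 statements merged into one kernel-verified Lean document; each statement's English description precedes it below -/
import Mathlib

section
/- Let n and m be positive integers, let K : ℝ^n → ℝ and Γ : ℝ^m → ℝ be convex functions with convex conjugates K* and Γ* (taking values in ℝ ∪ {+∞}), and let E : ℝ^m → ℝ^n be a linear map. Let u ∈ ℝ^n, y ∈ ℝ^n, ζ ∈ ℝ^m, μ ∈ ℝ^m satisfy u = −Eμ and ζ = Eᵀy. Then the following are equivalent: (a) y ∈ ∂K(u) and μ ∈ ∂Γ(ζ); (b) the pair (y, ζ) minimizes K*(y') + Γ(ζ') over all pairs with ζ' = Eᵀy', the pair (u, μ) minimizes K(u') + Γ*(μ') over all pairs with u' = −Eμ', and K(u) + K*(y) + Γ(ζ) + Γ*(μ) = 0. -/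
open Set

/-- The Fenchel–Legendre convex conjugate, with values in `EReal = ℝ ∪ {±∞}`
(for a real-valued `f` it only takes values in `ℝ ∪ {+∞}`). -/
noncomputable def fenchelConj {N : ℕ} (f : EuclideanSpace ℝ (Fin N) → ℝ)
    (y : EuclideanSpace ℝ (Fin N)) : EReal :=
  ⨆ x : EuclideanSpace ℝ (Fin N), (((inner ℝ y x : ℝ) - f x : ℝ) : EReal)

/-- The subdifferential of `f` at `x`. -/
def subdiff {N : ℕ} (f : EuclideanSpace ℝ (Fin N) → ℝ)
    (x : EuclideanSpace ℝ (Fin N)) : Set (EuclideanSpace ℝ (Fin N)) :=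
  {v | ∀ z, f x + (inner ℝ v (z - x) : ℝ) ≤ f z}

lemma le_fenchelConj {N : ℕ} (f : EuclideanSpace ℝ (Fin N) → ℝ)
    (v x : EuclideanSpace ℝ (Fin N)) :
    (((inner ℝ v x : ℝ) - f x : ℝ) : EReal) ≤ fenchelConj f v :=
  le_iSup (fun z => (((inner ℝ v z : ℝ) - f z : ℝ) : EReal)) x

lemma subdiff_iff {N : ℕ} (f : EuclideanSpace ℝ (Fin N) → ℝ)
    (x v : EuclideanSpace ℝ (Fin N)) :
    v ∈ subdiff f x ↔ fenchelConj f v = (((inner ℝ v x : ℝ) - f x : ℝ) : EReal) := by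
  constructor
  · intro hv
    refine le_antisymm (iSup_le fun z => ?_) (le_fenchelConj f v x)
    rw [EReal.coe_le_coe_iff]
    have h := hv z
    rw [inner_sub_right] at h
    linarith
  · intro h z
    have h2 := le_fenchelConj f v z
    rw [h, EReal.coe_le_coe_iff] at h2
    rw [inner_sub_right]
    linarith

/-- characterization of closed-loop steady-states as dual optimal
solutions of the optimal potential problem (OPP) and the optimal flow problem (OFP). -/
theorem stmt_2 (n m : ℕ) (hn : 0 < n) (hm : 0 < m)
    (K : EuclideanSpace ℝ (Fin n) → ℝ) (Γ : EuclideanSpace ℝ (Fin m) → ℝ)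
    (hK : ConvexOn ℝ univ K) (hΓ : ConvexOn ℝ univ Γ)
    (E : EuclideanSpace ℝ (Fin m) →ₗ[ℝ] EuclideanSpace ℝ (Fin n))
    (u y : EuclideanSpace ℝ (Fin n)) (ζ μ : EuclideanSpace ℝ (Fin m))
    (hu : u = -(E μ)) (hζ : ζ = LinearMap.adjoint E y) :
    (y ∈ subdiff K u ∧ μ ∈ subdiff Γ ζ) ↔
      ((∀ (y' : EuclideanSpace ℝ (Fin n)) (ζ' : EuclideanSpace ℝ (Fin m)),
          ζ' = LinearMap.adjoint E y' →
          fenchelConj K y + (Γ ζ : EReal) ≤ fenchelConj K y' + (Γ ζ' : EReal)) ∧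
       (∀ (u' : EuclideanSpace ℝ (Fin n)) (μ' : EuclideanSpace ℝ (Fin m)),
          u' = -(E μ') →
          (K u : EReal) + fenchelConj Γ μ ≤ (K u' : EReal) + fenchelConj Γ μ') ∧
       (K u : EReal) + fenchelConj K y + (Γ ζ : EReal) + fenchelConj Γ μ = 0) := by
  -- key inner ℝ product identities
  have hadj : ∀ (y' : EuclideanSpace ℝ (Fin n)) (μ' : EuclideanSpace ℝ (Fin m)),
      (inner ℝ (LinearMap.adjoint E y') μ' : ℝ) = (inner ℝ y' (E μ') : ℝ) := by
    intro y' μ'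
    exact LinearMap.adjoint_inner_left E μ' y'
  have key1 : ∀ (y' : EuclideanSpace ℝ (Fin n)) (ζ' : EuclideanSpace ℝ (Fin m)),
      ζ' = LinearMap.adjoint E y' → (inner ℝ y' u : ℝ) = -(inner ℝ ζ' μ : ℝ) := by
    intro y' ζ' h'
    rw [hu, h', hadj, inner_neg_right]
  have hyu : (inner ℝ y u : ℝ) = -(inner ℝ ζ μ : ℝ) := key1 y ζ hζ
  have key2 : ∀ (u' : EuclideanSpace ℝ (Fin n)) (μ' : EuclideanSpace ℝ (Fin m)),
      u' = -(E μ') → (inner ℝ y u' : ℝ) = -(inner ℝ μ' ζ : ℝ) := by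
    intro u' μ' h'
    rw [h', hζ, inner_neg_right, ← hadj, real_inner_comm]
  constructor
  · rintro ⟨hy, hμ⟩
    have hKc := (subdiff_iff K u y).1 hy
    have hΓc := (subdiff_iff Γ ζ μ).1 hμ
    refine ⟨?_, ?_, ?_⟩
    · intro y' ζ' h'
      rw [hKc]
      calc (((inner ℝ y u : ℝ) - K u : ℝ) : EReal) + (Γ ζ : EReal)
          = (((inner ℝ y u : ℝ) - K u + Γ ζ : ℝ) : EReal) := by norm_cast
        _ ≤ (((inner ℝ y' u : ℝ) - K u + Γ ζ' : ℝ) : EReal) := by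
            rw [EReal.coe_le_coe_iff]
            have hsub := hμ ζ'
            rw [inner_sub_right] at hsub
            have h1 := key1 y' ζ' h'
            have h2 : (inner ℝ μ ζ' : ℝ) = (inner ℝ ζ' μ : ℝ) := real_inner_comm _ _
            have h3 : (inner ℝ μ ζ : ℝ) = (inner ℝ ζ μ : ℝ) := real_inner_comm _ _
            linarith
        _ = (((inner ℝ y' u : ℝ) - K u : ℝ) : EReal) + (Γ ζ' : EReal) := by norm_cast
        _ ≤ fenchelConj K y' + (Γ ζ' : EReal) :=
            add_le_add_left (le_fenchelConj K y' u) _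
    · intro u' μ' h'
      rw [hΓc]
      calc (K u : EReal) + (((inner ℝ μ ζ : ℝ) - Γ ζ : ℝ) : EReal)
          = ((K u + ((inner ℝ μ ζ : ℝ) - Γ ζ) : ℝ) : EReal) := by norm_cast
        _ ≤ ((K u' + ((inner ℝ μ' ζ : ℝ) - Γ ζ) : ℝ) : EReal) := by
            rw [EReal.coe_le_coe_iff]
            have hsub := hy u'
            rw [inner_sub_right] at hsub
            have h1 := key2 u' μ' h'
            have h3 : (inner ℝ μ ζ : ℝ) = (inner ℝ ζ μ : ℝ) := real_inner_comm _ _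
            linarith
        _ = (K u' : EReal) + (((inner ℝ μ' ζ : ℝ) - Γ ζ : ℝ) : EReal) := by norm_cast
        _ ≤ (K u' : EReal) + fenchelConj Γ μ' :=
            add_le_add_right (le_fenchelConj Γ μ' ζ) _
    · rw [hKc, hΓc]
      have h3 : (inner ℝ μ ζ : ℝ) = (inner ℝ ζ μ : ℝ) := real_inner_comm _ _
      have : (K u + ((inner ℝ y u : ℝ) - K u) + Γ ζ + ((inner ℝ μ ζ : ℝ) - Γ ζ) : ℝ) = 0 := by
        rw [hyu, h3]; ring
      exact_mod_cast this
  · rintro ⟨-, -, heq⟩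
    have h1 := le_fenchelConj K y u
    have h2 := le_fenchelConj Γ μ ζ
    have hKb : fenchelConj K y ≠ ⊥ := by
      intro hb
      rw [hb] at h1
      exact EReal.coe_ne_bot _ (le_bot_iff.1 h1)
    have hΓb : fenchelConj Γ μ ≠ ⊥ := by
      intro hb
      rw [hb] at h2
      exact EReal.coe_ne_bot _ (le_bot_iff.1 h2)
    have hKt : fenchelConj K y ≠ ⊤ := by
      intro ht
      rw [ht] at heq
      rw [EReal.coe_add_top, EReal.top_add_coe, EReal.top_add_of_ne_bot hΓb] at heq
      exact EReal.top_ne_zero heq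
    have ha : fenchelConj K y = ((fenchelConj K y).toReal : EReal) :=
      (EReal.coe_toReal hKt hKb).symm
    set a := (fenchelConj K y).toReal with hadef
    rw [ha] at heq h1
    have hΓt : fenchelConj Γ μ ≠ ⊤ := by
      intro ht
      rw [ht] at heq
      have hcomb : ((K u : EReal) + (a : EReal) + ((Γ ζ : ℝ) : EReal))
          = ((K u + a + Γ ζ : ℝ) : EReal) := by norm_cast
      rw [hcomb, EReal.coe_add_top] at heq
      exact EReal.top_ne_zero heq
    have hb : fenchelConj Γ μ = ((fenchelConj Γ μ).toReal : EReal) :=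
      (EReal.coe_toReal hΓt hΓb).symm
    set b := (fenchelConj Γ μ).toReal with hbdef
    rw [hb] at heq h2
    have heqR : K u + a + Γ ζ + b = 0 := by exact_mod_cast heq
    have h1R : (inner ℝ y u : ℝ) - K u ≤ a := by exact_mod_cast h1
    have h2R : (inner ℝ μ ζ : ℝ) - Γ ζ ≤ b := by exact_mod_cast h2
    have h3 : (inner ℝ μ ζ : ℝ) = (inner ℝ ζ μ : ℝ) := real_inner_comm _ _
    have haR : a = (inner ℝ y u : ℝ) - K u := by
      rw [hyu] at h1R ⊢; linarith
    have hbR : b = (inner ℝ μ ζ : ℝ) - Γ ζ := by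
      rw [hyu] at h1R; linarith
    constructor
    · exact (subdiff_iff K u y).2 (by rw [ha, haR])
    · exact (subdiff_iff Γ ζ μ).2 (by rw [hb, hbR])
end

section
/- Let ψ : ℝ^n → ℝ be a differentiable strictly convex function satisfying ψ(x)/‖x‖ → ∞ as ‖x‖ → ∞, let J be a real skew-symmetric n × n matrix, and let b ∈ ℝ^n. Then there exists a unique x₀ ∈ ℝ^n such that ∇ψ(x₀) − J x₀ = b. -/
open Set Filter InnerProductSpace
open scoped Topology RealInnerProductSpace

section Aux

variable {E : Type*} [NormedAddCommGroup E] [InnerProductSpace ℝ E] [FiniteDimensional ℝ E]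

private theorem my_grad_lt (ψ : E → ℝ) (hdiff : Differentiable ℝ ψ)
    (hconv : StrictConvexOn ℝ univ ψ) {x y : E} (hxy : x ≠ y) :
    ψ x + ⟪gradient ψ x, y - x⟫ < ψ y := by
  set v := y - x with hv
  have hv0 : v ≠ 0 := sub_ne_zero.2 (Ne.symm hxy)
  set q : ℝ → ℝ := fun t => ψ (x + t • v) with hq
  have hqconv : StrictConvexOn ℝ univ q := by
    refine ⟨convex_univ, fun s _ t _ hst a c ha hc hac => ?_⟩
    have key : a • (x + s • v) + c • (x + t • v) = (a + c) • x + (a * s + c * t) • v := by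
      module
    have hne : x + s • v ≠ x + t • v := by
      intro h
      apply hst
      have := add_left_cancel h
      have h2 : (s - t) • v = 0 := by rw [sub_smul, this, sub_self]
      rcases smul_eq_zero.1 h2 with h3 | h3
      · linarith [sub_eq_zero.1 (by linarith [sub_eq_zero.2 (rfl : (0:ℝ) = 0)] : s - t = 0)]
      · exact absurd h3 hv0
    calc q (a • s + c • t) = ψ (a • (x + s • v) + c • (x + t • v)) := by
          simp only [hq, smul_eq_mul]; rw [key, hac, one_smul]
      _ < a • ψ (x + s • v) + c • ψ (x + t • v) :=
          hconv.2 (mem_univ _) (mem_univ _) hne ha hc hac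
  have hder : HasDerivAt q ⟪gradient ψ x, v⟫ 0 := by
    have h1 : HasDerivAt (fun t : ℝ => x + t • v) v 0 := by
      simpa using ((hasDerivAt_id (0 : ℝ)).smul_const v).const_add x
    have h2 : HasFDerivAt ψ (toDual ℝ E (gradient ψ x)) x := (hdiff x).hasGradientAt.hasFDerivAt
    have h2' : HasFDerivAt ψ (toDual ℝ E (gradient ψ x)) (x + (0:ℝ) • v) := by simpa using h2
    have h3 := h2'.comp_hasDerivAt (0 : ℝ) h1
    simpa [toDual_apply_apply, Function.comp_def] using h3
  have := hqconv.lt_slope_of_hasDerivAt (mem_univ (0 : ℝ)) (mem_univ 1) one_pos hder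
  rw [slope_def_field] at this
  simp only [hq, zero_smul, add_zero, one_smul] at this
  have hy1 : x + v = y := by rw [hv]; abel
  rw [hy1] at this
  have : ⟪gradient ψ x, v⟫ < ψ y - ψ x := by
    convert this using 1; field_simp; ring
  linarith

private theorem my_grad_le (ψ : E → ℝ) (hdiff : Differentiable ℝ ψ)
    (hconv : StrictConvexOn ℝ univ ψ) (x y : E) :
    ψ x + ⟪gradient ψ x, y - x⟫ ≤ ψ y := by
  rcases eq_or_ne x y with rfl | h
  · simp
  · exact (my_grad_lt ψ hdiff hconv h).le

private theorem my_mono (ψ : E → ℝ) (hdiff : Differentiable ℝ ψ)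
    (hconv : StrictConvexOn ℝ univ ψ) {x y : E} (hxy : x ≠ y) :
    0 < ⟪gradient ψ x - gradient ψ y, x - y⟫ := by
  have h1 := my_grad_lt ψ hdiff hconv hxy
  have h2 := my_grad_lt ψ hdiff hconv (Ne.symm hxy)
  have e1 : ⟪gradient ψ x - gradient ψ y, x - y⟫
      = -⟪gradient ψ x, y - x⟫ - ⟪gradient ψ y, x - y⟫ := by
    rw [inner_sub_left]
    have : (y - x) = -(x - y) := by abel
    rw [this, inner_neg_right]
    ring
  rw [e1]; linarith

private theorem my_exists_min (ψ : E → ℝ) (hdiff : Differentiable ℝ ψ)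
    (hcoercive : Tendsto (fun x : E => ψ x / ‖x‖) (Bornology.cobounded _) atTop)
    (φ : E → ℝ) (hφ : Continuous φ) (c d : ℝ) (hbound : ∀ x, ψ x - c * ‖x‖ - d ≤ φ x) :
    ∃ z, ∀ x, φ z ≤ φ x := by
  have : Nonempty E := ⟨0⟩
  apply hφ.exists_forall_le
  rw [← Metric.cobounded_eq_cocompact]
  rw [tendsto_atTop]
  intro M
  have h1 : ∀ᶠ x in Bornology.cobounded E, |c| + max (M + d) 0 ≤ ψ x / ‖x‖ :=
    hcoercive.eventually (eventually_ge_atTop _)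
  have h2 : ∀ᶠ x in Bornology.cobounded E, 1 ≤ ‖x‖ := by
    have := tendsto_norm_cobounded_atTop (E := E)
    exact this.eventually (eventually_ge_atTop 1)
  filter_upwards [h1, h2] with x hx1 hx2
  have hb := hbound x
  have hxpos : (0:ℝ) < ‖x‖ := by linarith
  have heq : ψ x = ψ x / ‖x‖ * ‖x‖ := by field_simp
  have hc : c ≤ |c| := le_abs_self c
  have hm1 : M + d ≤ max (M + d) 0 := le_max_left _ _
  have hm2 : (0:ℝ) ≤ max (M + d) 0 := le_max_right _ _
  have hcx : c * ‖x‖ ≤ |c| * ‖x‖ := by nlinarith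
  nlinarith [mul_le_mul_of_nonneg_right hx1 hxpos.le]

private theorem my_dir (ψ : E → ℝ) (hdiff : Differentiable ℝ ψ) (z v : E) :
    HasDerivAt (fun t : ℝ => ψ (z + t • v)) ⟪gradient ψ z, v⟫ 0 := by
  have h1 : HasDerivAt (fun t : ℝ => z + t • v) v 0 := by
    simpa using ((hasDerivAt_id (0 : ℝ)).smul_const v).const_add z
  have h2 : HasFDerivAt ψ (toDual ℝ E (gradient ψ z)) (z + (0:ℝ) • v) := by
    simpa using (hdiff z).hasGradientAt.hasFDerivAt
  simpa [toDual_apply_apply, Function.comp_def] using h2.comp_hasDerivAt (0 : ℝ) h1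

/-- if `p` is a subgradient of `ψ` at `z` then `p = ∇ψ z`. -/
private theorem my_subgrad (ψ : E → ℝ) (hdiff : Differentiable ℝ ψ) {z p : E}
    (hsub : ∀ x, ψ z + ⟪p, x - z⟫ ≤ ψ x) : gradient ψ z = p := by
  have hdirle : ∀ v : E, ⟪p, v⟫ ≤ ⟪gradient ψ z, v⟫ := by
    intro v
    have hder := my_dir ψ hdiff z v
    rw [hasDerivAt_iff_tendsto_slope] at hder
    have hder' : Tendsto (slope (fun t : ℝ => ψ (z + t • v)) 0) (𝓝[>] (0:ℝ))
        (𝓝 ⟪gradient ψ z, v⟫) :=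
      hder.mono_left (nhdsWithin_mono 0 (fun t ht => ne_of_gt ht))
    refine ge_of_tendsto hder' ?_
    filter_upwards [self_mem_nhdsWithin] with t (ht : 0 < t)
    have h1 := hsub (z + t • v)
    have h2 : ⟪p, z + t • v - z⟫ = t * ⟪p, v⟫ := by
      rw [add_sub_cancel_left, real_inner_smul_right]
    rw [slope_def_field]
    simp only [zero_smul, add_zero, sub_zero]
    rw [le_div_iff₀ ht]
    nlinarith [h1, h2]
  have hv := hdirle (p - gradient ψ z)
  have : ⟪p - gradient ψ z, p - gradient ψ z⟫ ≤ 0 := by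
    have := sub_nonneg.2 hv
    have e : ⟪gradient ψ z, p - gradient ψ z⟫ - ⟪p, p - gradient ψ z⟫
        = -⟪p - gradient ψ z, p - gradient ψ z⟫ := by
      rw [← inner_sub_left]
      have : gradient ψ z - p = -(p - gradient ψ z) := by abel
      rw [this, inner_neg_left]
    linarith [e ▸ this]
  have h0 : p - gradient ψ z = 0 := by
    have hz0 : ⟪p - gradient ψ z, p - gradient ψ z⟫ = 0 :=
      le_antisymm this real_inner_self_nonneg
    exact (@inner_self_eq_zero ℝ _ _ _ _ (p - gradient ψ z)).1 hz0
  rw [sub_eq_zero] at h0; exact h0.symm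

private theorem my_bound (ψ : E → ℝ)  (hdiff : Differentiable ℝ ψ)
    (hconv : StrictConvexOn ℝ univ ψ)
    (hcoercive : Tendsto (fun x : E => ψ x / ‖x‖) (Bornology.cobounded _) atTop)
    (C : ℝ) : ∃ R ≥ 1, ∀ x : E, ‖gradient ψ x‖ ≤ C → ‖x‖ ≤ R := by
  set K := |C| + |ψ 0| + 1 with hK
  have hev : ∀ᶠ x in Bornology.cobounded E, K ≤ ψ x / ‖x‖ :=
    hcoercive.eventually (eventually_ge_atTop K)
  rw [(Metric.hasBasis_cobounded_compl_closedBall (0:E)).eventually_iff] at hev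
  obtain ⟨r, -, hr⟩ := hev
  refine ⟨max r 1, le_max_right _ _, fun x hx => ?_⟩
  by_contra hcon
  push_neg at hcon
  have hx1 : 1 < ‖x‖ := lt_of_le_of_lt (le_max_right r 1) hcon
  have hxr : r < ‖x‖ := lt_of_le_of_lt (le_max_left r 1) hcon
  have hmem : x ∈ (Metric.closedBall (0:E) r)ᶜ := by
    simp only [mem_compl_iff, Metric.mem_closedBall, dist_zero_right]
    linarith
  have hKx : K ≤ ψ x / ‖x‖ := hr hmem
  have hxpos : (0:ℝ) < ‖x‖ := by linarith
  have hψx : K * ‖x‖ ≤ ψ x := by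
    rw [le_div_iff₀ hxpos] at hKx; linarith
  -- upper bound: ψ x ≤ ψ 0 + ⟪∇ψ x, x⟫ ≤ ψ 0 + C ‖x‖
  have h1 := my_grad_le ψ hdiff hconv x 0
  have h2 : ⟪gradient ψ x, (0:E) - x⟫ = -⟪gradient ψ x, x⟫ := by
    rw [zero_sub, inner_neg_right]
  have h3 : ⟪gradient ψ x, x⟫ ≤ C * ‖x‖ := by
    calc ⟪gradient ψ x, x⟫ ≤ ‖gradient ψ x‖ * ‖x‖ := real_inner_le_norm _ _
      _ ≤ C * ‖x‖ := by nlinarith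
  have hC : C ≤ |C| := le_abs_self C
  have hψ0 : ψ 0 ≤ |ψ 0| := le_abs_self _
  have h4 : |ψ 0| ≤ |ψ 0| * ‖x‖ := le_mul_of_one_le_right (abs_nonneg _) hx1.le
  have hKex : K * ‖x‖ = |C| * ‖x‖ + |ψ 0| * ‖x‖ + ‖x‖ := by rw [hK]; ring
  have h5 : C * ‖x‖ ≤ |C| * ‖x‖ := by nlinarith
  linarith

private theorem my_surj (ψ : E → ℝ) (hdiff : Differentiable ℝ ψ)
    (hcoercive : Tendsto (fun x : E => ψ x / ‖x‖) (Bornology.cobounded _) atTop)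
    (p : E) : ∃ z, gradient ψ z = p := by
  set φ : E → ℝ := fun x => ψ x - ⟪p, x⟫ with hφdef
  have hφcont : Continuous φ :=
    (hdiff.continuous).sub (continuous_const.inner continuous_id)
  have hbound : ∀ x, ψ x - ‖p‖ * ‖x‖ - 0 ≤ φ x := by
    intro x
    have := real_inner_le_norm p x
    simp only [hφdef]; linarith
  obtain ⟨z, hz⟩ := my_exists_min ψ hdiff hcoercive φ hφcont ‖p‖ 0 hbound
  have hmin : IsLocalMin φ z := Filter.Eventually.of_forall hz
  have h1 : HasFDerivAt ψ (toDual ℝ E (gradient ψ z)) z := (hdiff z).hasGradientAt.hasFDerivAt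
  have h2 : HasFDerivAt (fun x : E => ⟪p, x⟫) (toDual ℝ E p) z := by
    have := (toDual ℝ E p).hasFDerivAt (x := z)
    exact this
  have h3 : HasFDerivAt φ (toDual ℝ E (gradient ψ z) - toDual ℝ E p) z := h1.sub h2
  have h4 := hmin.hasFDerivAt_eq_zero h3
  refine ⟨z, ?_⟩
  have h5 : toDual ℝ E (gradient ψ z - p) = 0 := by rw [map_sub]; exact h4
  have h6 : gradient ψ z - p = 0 := by
    have h7 : toDual ℝ E (gradient ψ z - p) = toDual ℝ E 0 := by rw [map_zero]; exact h5
    exact (toDual ℝ E).injective h7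
  exact sub_eq_zero.1 h6

set_option maxHeartbeats 1000000 in
private theorem my_g_cont (ψ : E → ℝ) (hdiff : Differentiable ℝ ψ)
    (hconv : StrictConvexOn ℝ univ ψ)
    (hcoercive : Tendsto (fun x : E => ψ x / ‖x‖) (Bornology.cobounded _) atTop)
    (g : E → E) (hg : ∀ q, gradient ψ (g q) = q) : Continuous g := by
  rw [continuous_iff_continuousAt]
  intro p
  rw [ContinuousAt]
  apply tendsto_of_subseq_tendsto
  intro ns hns
  -- eventual bound on the sequence
  have hev : ∀ᶠ n in atTop, ‖ns n‖ ≤ ‖p‖ + 1 := by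
    filter_upwards [hns (Metric.closedBall_mem_nhds p one_pos)] with n hn
    have : dist (ns n) p ≤ 1 := by simpa [Metric.mem_closedBall] using hn
    have h2 : ‖ns n‖ ≤ ‖p‖ + ‖ns n - p‖ := by
      have := norm_add_le p (ns n - p); simpa using this
    rw [dist_eq_norm] at this
    linarith
  obtain ⟨N, hN⟩ := eventually_atTop.1 hev
  obtain ⟨R, hR1, hR⟩ := my_bound ψ hdiff hconv hcoercive (‖p‖ + 1)
  set y : ℕ → E := fun k => g (ns (N + k)) with hy
  have hyb : ∀ k, y k ∈ Metric.closedBall (0:E) R := by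
    intro k
    rw [Metric.mem_closedBall, dist_zero_right]
    exact hR _ (by rw [hg]; exact hN _ (Nat.le_add_right N k))
  obtain ⟨z, -, φ, hφmono, hφtend⟩ :=
    tendsto_subseq_of_bounded Metric.isBounded_closedBall hyb
  -- the indices N + φ k still tend to atTop
  have hidx : Tendsto (fun k => N + φ k) atTop atTop := by
    apply tendsto_atTop_mono (fun k => Nat.le_add_left (φ k) N) hφmono.tendsto_atTop
  have hnssub : Tendsto (fun k => ns (N + φ k)) atTop (𝓝 p) := hns.comp hidx
  -- pass the subgradient inequality to the limit
  have hsub : ∀ x, ψ z + ⟪p, x - z⟫ ≤ ψ x := by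
    intro x
    have hk : ∀ k, ψ (y (φ k)) + ⟪ns (N + φ k), x - y (φ k)⟫ ≤ ψ x := by
      intro k
      have h := my_grad_le ψ hdiff hconv (y (φ k)) x
      rwa [hy, hg] at h
    have hlim : Tendsto (fun k => ψ (y (φ k)) + ⟪ns (N + φ k), x - y (φ k)⟫) atTop
        (𝓝 (ψ z + ⟪p, x - z⟫)) := by
      exact Tendsto.add ((hdiff.continuous.tendsto z).comp hφtend)
        (Tendsto.inner hnssub (Tendsto.sub tendsto_const_nhds hφtend))
    exact le_of_tendsto hlim (Eventually.of_forall hk)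
  have hzp : gradient ψ z = p := my_subgrad ψ hdiff hsub
  -- injectivity: z = g p
  have hzgp : z = g p := by
    by_contra hne
    have := my_mono ψ hdiff hconv hne
    rw [hzp, hg, sub_self] at this
    simp at this
  exact ⟨fun k => N + φ k, by rw [← hzgp]; exact hφtend⟩

private theorem my_star_ge (ψ : E → ℝ) (hdiff : Differentiable ℝ ψ)
    (hconv : StrictConvexOn ℝ univ ψ) (g : E → E) (hg : ∀ q, gradient ψ (g q) = q)
    (p x : E) : ⟪p, x⟫ - ψ x ≤ ⟪p, g p⟫ - ψ (g p) := by
  have h := my_grad_le ψ hdiff hconv (g p) x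
  rw [hg, inner_sub_right] at h
  linarith

private theorem my_star_grad (ψ : E → ℝ) (hdiff : Differentiable ℝ ψ)
    (hconv : StrictConvexOn ℝ univ ψ) (g : E → E) (hg : ∀ q, gradient ψ (g q) = q)
    (hgcont : Continuous g) (p : E) :
    HasGradientAt (fun q => ⟪q, g q⟫ - ψ (g q)) (g p) p := by
  set s : E → ℝ := fun q => ⟪q, g q⟫ - ψ (g q) with hs
  have lower : ∀ q, ⟪q - p, g p⟫ ≤ s q - s p := by
    intro q
    have h := my_star_ge ψ hdiff hconv g hg q (g p)
    rw [inner_sub_left]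
    simp only [hs]
    linarith
  have upper : ∀ q, s q - s p ≤ ⟪q - p, g q⟫ := by
    intro q
    have h := my_star_ge ψ hdiff hconv g hg p (g q)
    rw [inner_sub_left]
    simp only [hs]
    linarith
  rw [hasGradientAt_iff_hasFDerivAt, hasFDerivAt_iff_isLittleO_nhds_zero]
  rw [Asymptotics.isLittleO_iff]
  intro c hc
  have T : Tendsto (fun w : E => g (p + w)) (𝓝 0) (𝓝 (g p)) := by
    have h1 : Tendsto (fun w : E => p + w) (𝓝 0) (𝓝 p) := by
      have := (tendsto_const_nhds (x := p) (f := 𝓝 (0:E))).add (tendsto_id (x := 𝓝 (0:E)))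
      simpa using this
    exact (hgcont.tendsto p).comp h1
  filter_upwards [T (Metric.closedBall_mem_nhds (g p) hc)] with w hw
  have hdist : ‖g (p + w) - g p‖ ≤ c := by
    rw [← dist_eq_norm]; simpa [Metric.mem_closedBall] using hw
  have h0 : (0:ℝ) ≤ s (p + w) - s p - ⟪g p, w⟫ := by
    have := lower (p + w)
    rw [add_sub_cancel_left] at this
    rw [real_inner_comm] at this
    linarith
  have h1 : s (p + w) - s p - ⟪g p, w⟫ ≤ c * ‖w‖ := by
    have h2 := upper (p + w)
    rw [add_sub_cancel_left] at h2
    have h3 : ⟪w, g (p + w)⟫ - ⟪g p, w⟫ = ⟪w, g (p + w) - g p⟫ := by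
      rw [inner_sub_right, real_inner_comm w (g p)]
    have h4 : ⟪w, g (p + w) - g p⟫ ≤ ‖w‖ * ‖g (p + w) - g p‖ := real_inner_le_norm _ _
    have h5 : ‖w‖ * ‖g (p + w) - g p‖ ≤ ‖w‖ * c := by
      apply mul_le_mul_of_nonneg_left hdist (norm_nonneg _)
    nlinarith [norm_nonneg w]
  have : ‖s (p + w) - s p - ⟪g p, w⟫‖ = s (p + w) - s p - ⟪g p, w⟫ := by
    rw [Real.norm_eq_abs, abs_of_nonneg h0]
  have e : ((toDual ℝ E) (g p)) w = ⟪g p, w⟫ := toDual_apply_apply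
  rw [e, this]
  exact h1

private theorem my_main (ψ : E → ℝ) (hdiff : Differentiable ℝ ψ)
    (hconv : StrictConvexOn ℝ univ ψ)
    (hcoercive : Tendsto (fun x : E => ψ x / ‖x‖) (Bornology.cobounded _) atTop)
    (L : E →ₗ[ℝ] E) (skew : ∀ x y : E, ⟪L x, y⟫ = -⟪x, L y⟫) (b : E) :
    ∃! x₀ : E, gradient ψ x₀ - L x₀ = b := by
  set Lc : E →L[ℝ] E := LinearMap.toContinuousLinearMap L with hLc
  have hLcL : ∀ x : E, Lc x = L x := fun x => rfl
  have skewquad : ∀ u : E, ⟪L u, u⟫ = 0 := by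
    intro u
    have h1 := skew u u
    have h2 : ⟪u, L u⟫ = ⟪L u, u⟫ := real_inner_comm _ _
    linarith
  -- uniqueness part, used twice
  have huniq : ∀ x y : E, gradient ψ x - L x = b → gradient ψ y - L y = b → x = y := by
    intro x y hx hy
    by_contra hne
    have hmono := my_mono ψ hdiff hconv hne
    have e : gradient ψ x - L x = gradient ψ y - L y := by rw [hx, hy]
    have e2 : gradient ψ x - gradient ψ y = L x - L y := sub_eq_sub_iff_sub_eq_sub.1 e
    rw [e2, ← map_sub, skewquad] at hmono
    exact lt_irrefl _ hmono
  -- inverse gradient map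
  choose g hg using my_surj ψ hdiff hcoercive
  have hgcont : Continuous g := my_g_cont ψ hdiff hconv hcoercive g hg
  set ψstar : E → ℝ := fun p => ⟪p, g p⟫ - ψ (g p) with hψstar
  set h : E → ℝ := fun x => ψ x + ψstar (Lc x + b) - ⟪b, x⟫ with hh
  have hstarcont : Continuous ψstar :=
    (continuous_id.inner hgcont).sub (hdiff.continuous.comp hgcont)
  have hhcont : Continuous h :=
    ((hdiff.continuous).add (hstarcont.comp (Lc.continuous.add continuous_const))).sub
      (continuous_const.inner continuous_id)
  have hbound : ∀ x, ψ x - ‖b‖ * ‖x‖ - ψ 0 ≤ h x := by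
    intro x
    have h1 := my_star_ge ψ hdiff hconv g hg (Lc x + b) 0
    rw [inner_zero_right] at h1
    have h2 : ⟪b, x⟫ ≤ ‖b‖ * ‖x‖ := real_inner_le_norm b x
    have h1' : -ψ 0 ≤ ψstar (Lc x + b) := by simp only [hψstar]; linarith
    show ψ x - ‖b‖ * ‖x‖ - ψ 0 ≤ ψ x + ψstar (Lc x + b) - ⟪b, x⟫
    linarith
  obtain ⟨z, hz⟩ := my_exists_min ψ hdiff hcoercive h hhcont ‖b‖ (ψ 0) hbound
  have hmin : IsLocalMin h z := Filter.Eventually.of_forall hz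
  set pbar : E := Lc z + b with hpbar
  set ybar : E := g pbar with hybar
  have f1 : HasFDerivAt ψ (toDual ℝ E (gradient ψ z)) z := (hdiff z).hasGradientAt.hasFDerivAt
  have haf : HasFDerivAt (fun x : E => Lc x + b) Lc z := Lc.hasFDerivAt.add_const b
  have hg2 : HasFDerivAt ψstar (toDual ℝ E ybar) pbar :=
    (my_star_grad ψ hdiff hconv g hg hgcont pbar).hasFDerivAt
  have f2 : HasFDerivAt (fun x : E => ψstar (Lc x + b)) ((toDual ℝ E ybar).comp Lc) z :=
    by have := hg2.comp z haf; exact this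
  have f3 : HasFDerivAt (fun x : E => ⟪b, x⟫) (toDual ℝ E b) z := by
    have := (toDual ℝ E b).hasFDerivAt (x := z)
    exact this
  have fh : HasFDerivAt h (toDual ℝ E (gradient ψ z) + (toDual ℝ E ybar).comp Lc
      - toDual ℝ E b) z := (f1.add f2).sub f3
  have hD0 := hmin.hasFDerivAt_eq_zero fh
  have hvar : ∀ v : E, ⟪gradient ψ z - L ybar - b, v⟫ = 0 := by
    intro v
    have h1 : (toDual ℝ E (gradient ψ z) + (toDual ℝ E ybar).comp Lc - toDual ℝ E b) v = 0 := by
      rw [hD0]; rfl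
    simp only [ContinuousLinearMap.sub_apply, ContinuousLinearMap.add_apply,
      ContinuousLinearMap.comp_apply, toDual_apply_apply] at h1
    have h2 : ⟪ybar, Lc v⟫ = -⟪L ybar, v⟫ := by
      rw [hLcL, real_inner_comm]
      linarith [skew v ybar, real_inner_comm v (L ybar)]
    rw [inner_sub_left, inner_sub_left]
    linarith
  have hgradz : gradient ψ z = b + L ybar := by
    have h0 : gradient ψ z - L ybar - b = 0 :=
      (@inner_self_eq_zero ℝ _ _ _ _ _).1 (hvar (gradient ψ z - L ybar - b))
    have : gradient ψ z - (L ybar + b) = 0 := by rw [← h0]; abel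
    have := sub_eq_zero.1 this
    rw [this]; abel
  have hgrady : gradient ψ ybar = L z + b := hg pbar
  have hzy : z = ybar := by
    by_contra hne
    have hmono := my_mono ψ hdiff hconv hne
    have : gradient ψ z - gradient ψ ybar = L (ybar - z) := by
      rw [hgradz, hgrady, map_sub]; abel
    rw [this] at hmono
    have e1 : (ybar - z) = -(z - ybar) := by abel
    rw [e1, map_neg, inner_neg_left, skewquad] at hmono
    simp at hmono
  have hsol : gradient ψ z - L z = b := by
    rw [hgradz, ← hzy]; abel
  exact ⟨z, hsol, fun y hy => huniq y z hy hsol⟩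

end Aux

/-- for a differentiable strictly convex superlinear `ψ`, a
skew-symmetric `J` and `b ∈ ℝⁿ`, there is a unique `x₀` with `∇ψ(x₀) − Jx₀ = b`. -/
theorem stmt_7 (n : ℕ) (hn : 0 < n)
    (ψ : EuclideanSpace ℝ (Fin n) → ℝ)
    (hdiff : Differentiable ℝ ψ)
    (hconv : StrictConvexOn ℝ univ ψ)
    (hcoercive : Tendsto (fun x : EuclideanSpace ℝ (Fin n) => ψ x / ‖x‖)
      (Bornology.cobounded _) atTop)
    (J : Matrix (Fin n) (Fin n) ℝ) (hJ : J.transpose = -J)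
    (b : EuclideanSpace ℝ (Fin n)) :
    ∃! x₀ : EuclideanSpace ℝ (Fin n),
      gradient ψ x₀ - Matrix.toEuclideanLin J x₀ = b := by
  have hconjT : J.conjTranspose = -J := by
    rw [← hJ]; ext i j; simp [Matrix.conjTranspose_apply]
  have hadj : LinearMap.adjoint (Matrix.toEuclideanLin J) = -(Matrix.toEuclideanLin J) := by
    rw [← Matrix.toEuclideanLin_conjTranspose_eq_adjoint, hconjT, map_neg]
  have skew : ∀ x y : EuclideanSpace ℝ (Fin n),
      ⟪Matrix.toEuclideanLin J x, y⟫ = -⟪x, Matrix.toEuclideanLin J y⟫ := by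
    intro x y
    have h1 := LinearMap.adjoint_inner_right (Matrix.toEuclideanLin J) x y
    rw [hadj] at h1
    simp only [LinearMap.neg_apply, inner_neg_right] at h1
    linarith
  exact my_main ψ hdiff hconv hcoercive (Matrix.toEuclideanLin J) skew b
end

section
/- Let ψ : ℝ^n → ℝ be a continuously differentiable strictly convex function satisfying ψ(x)/‖x‖ → ∞ as ‖x‖ → ∞, let J be a real skew-symmetric n × n matrix, and let b ∈ ℝ^n. Let x₀ ∈ ℝ^n be the (unique) point with ∇ψ(x₀) − J x₀ = b. Then every differentiable curve x : [0, ∞) → ℝ^n satisfying x'(t) = −∇ψ(x(t)) + J x(t) + b for all t ≥ 0 converges to x₀, i.e. x(t) → x₀ as t → ∞. -/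
open Set Filter Topology

local notation "⟪" x ", " y "⟫" => @inner ℝ _ _ x y

/-- every solution of `ẋ = −∇ψ(x) + Jx + b`, with `ψ` a `C¹` strictly
convex superlinear function and `J` skew-symmetric, converges to the unique point
`x₀` with `∇ψ(x₀) − Jx₀ = b`. -/
theorem stmt_8 (n : ℕ) (hn : 0 < n)
    (ψ : EuclideanSpace ℝ (Fin n) → ℝ)
    (hsmooth : ContDiff ℝ 1 ψ)
    (hconv : StrictConvexOn ℝ univ ψ)
    (hcoercive : Tendsto (fun x : EuclideanSpace ℝ (Fin n) => ψ x / ‖x‖)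
      (Bornology.cobounded _) atTop)
    (J : Matrix (Fin n) (Fin n) ℝ) (hJ : J.transpose = -J)
    (b : EuclideanSpace ℝ (Fin n))
    (x₀ : EuclideanSpace ℝ (Fin n))
    (hx₀ : gradient ψ x₀ - Matrix.toEuclideanLin J x₀ = b)
    (x : ℝ → EuclideanSpace ℝ (Fin n))
    (hode : ∀ t : ℝ, 0 ≤ t →
      HasDerivAt x (-gradient ψ (x t) + Matrix.toEuclideanLin J (x t) + b) t) :
    Tendsto x atTop (nhds x₀) := by
  classical
  have hdiff : Differentiable ℝ ψ := hsmooth.differentiable one_ne_zero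
  set g : EuclideanSpace ℝ (Fin n) → EuclideanSpace ℝ (Fin n) := gradient ψ with hgdef
  set Lm : EuclideanSpace ℝ (Fin n) →ₗ[ℝ] EuclideanSpace ℝ (Fin n) :=
    Matrix.toEuclideanLin J with hLdef
  -- continuity of the gradient
  have hgcont : Continuous g := by
    have h1 : Continuous (fderiv ℝ ψ) := hsmooth.continuous_fderiv one_ne_zero
    exact ((InnerProductSpace.toDual ℝ (EuclideanSpace ℝ (Fin n))).symm.continuous).comp h1
  -- the fundamental gradient inequality of strictly convex functions
  have key : ∀ y z : EuclideanSpace ℝ (Fin n), y ≠ z → ⟪g y, z - y⟫ < ψ z - ψ y := by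
    intro y z hyz
    set v := z - y with hv
    have hv0 : v ≠ 0 := sub_ne_zero.mpr (Ne.symm hyz)
    have hφ : StrictConvexOn ℝ (univ : Set ℝ) (fun t : ℝ => ψ (y + t • v)) := by
      refine ⟨convex_univ, ?_⟩
      intro s _ t _ hst a b' ha hb hab
      have hb' : b' = 1 - a := by linarith
      subst hb'
      have hne : y + s • v ≠ y + t • v := by
        intro hcontra
        exact hst (smul_left_injective ℝ hv0 (add_left_cancel hcontra))
      have h2 := hconv.2 (mem_univ (y + s • v)) (mem_univ (y + t • v)) hne ha hb hab
      calc (fun t : ℝ => ψ (y + t • v)) (a • s + (1 - a) • t)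
          = ψ (a • (y + s • v) + (1 - a) • (y + t • v)) := by
            simp only; congr 1; simp only [smul_eq_mul]; module
        _ < a • ψ (y + s • v) + (1 - a) • ψ (y + t • v) := h2
    have hc : HasDerivAt (fun t : ℝ => y + t • v) v 0 := by
      simpa using ((hasDerivAt_id (0 : ℝ)).smul_const v).const_add y
    have hψd : HasDerivAt (fun t : ℝ => ψ (y + t • v)) ⟪g y, v⟫ 0 := by
      have hF : HasFDerivAt ψ (InnerProductSpace.toDual ℝ _ (g y)) y :=
        ((hdiff y).hasGradientAt).hasFDerivAt
      have h0 : y = (fun t : ℝ => y + t • v) 0 := by simp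
      rw [h0] at hF
      have := hF.comp_hasDerivAt 0 hc
      simpa [InnerProductSpace.toDual_apply_apply, Function.comp_def] using this
    have hs := hφ.lt_slope_of_hasDerivAt (mem_univ (0 : ℝ)) (mem_univ 1) one_pos hψd
    have : slope (fun t : ℝ => ψ (y + t • v)) 0 1 = ψ z - ψ y := by
      simp [slope_def_field, hv]
    rwa [this] at hs
  -- strict monotonicity of the gradient
  have mono : ∀ y : EuclideanSpace ℝ (Fin n), y ≠ x₀ → 0 < ⟪g y - g x₀, y - x₀⟫ := by
    intro y hy
    have h1 := key x₀ y (Ne.symm hy)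
    have h2 := key y x₀ hy
    have e1 : ⟪g y, x₀ - y⟫ = -⟪g y, y - x₀⟫ := by rw [← inner_neg_right, neg_sub]
    have e2 : ⟪g y - g x₀, y - x₀⟫ = ⟪g y, y - x₀⟫ - ⟪g x₀, y - x₀⟫ :=
      inner_sub_left _ _ _
    rw [e1] at h2
    linarith
  -- skew-symmetry
  have hskew : ∀ v : EuclideanSpace ℝ (Fin n), ⟪Lm v, v⟫ = 0 := by
    have hJH : J.conjTranspose = -J := by
      rw [← hJ]; ext i j; simp [Matrix.conjTranspose_apply]
    intro v
    have h3 : LinearMap.adjoint Lm = -Lm := by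
      rw [hLdef, ← Matrix.toEuclideanLin_conjTranspose_eq_adjoint, hJH, map_neg]
    have h2 : ⟪Lm v, v⟫ = ⟪v, (LinearMap.adjoint Lm) v⟫ :=
      (LinearMap.adjoint_inner_right Lm v v).symm
    rw [h3] at h2
    simp only [LinearMap.neg_apply, inner_neg_right] at h2
    have h1 : ⟪v, Lm v⟫ = ⟪Lm v, v⟫ := real_inner_comm _ _
    linarith
  -- rewrite the ODE
  have hode' : ∀ t : ℝ, 0 ≤ t →
      HasDerivAt x (-(g (x t) - g x₀) + Lm (x t - x₀)) t := by
    intro t ht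
    have h := hode t ht
    convert h using 1
    rw [← hx₀]
    rw [map_sub]
    abel
  -- the Lyapunov function
  set h : EuclideanSpace ℝ (Fin n) → ℝ := fun y => ⟪g y - g x₀, y - x₀⟫ with hhdef
  have hhcont : Continuous h :=
    (hgcont.sub continuous_const).inner (continuous_id.sub continuous_const)
  have hhnn : ∀ y, 0 ≤ h y := by
    intro y
    rcases eq_or_ne y x₀ with rfl | hy
    · simp [hhdef]
    · exact (mono y hy).le
  set D : ℝ → ℝ := fun t => ⟪x t - x₀, x t - x₀⟫ with hDdef
  have hDnn : ∀ t, 0 ≤ D t := fun t => real_inner_self_nonneg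
  have hDderiv : ∀ t : ℝ, 0 ≤ t → HasDerivAt D (-2 * h (x t)) t := by
    intro t ht
    have hx' := (hode' t ht).sub_const x₀
    have hD := HasDerivAt.inner ℝ hx' hx'
    have e : ⟪-(g (x t) - g x₀) + Lm (x t - x₀), x t - x₀⟫ = -h (x t) := by
      rw [inner_add_left, inner_neg_left, hskew, hhdef]
      simp
    have e2 : ⟪x t - x₀, -(g (x t) - g x₀) + Lm (x t - x₀)⟫ = -h (x t) := by
      rw [real_inner_comm]; exact e
    rw [e, e2] at hD
    exact hD.congr_deriv (by ring)
  -- antitonicity helper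
  have anti : ∀ (f f' : ℝ → ℝ), (∀ t, 0 ≤ t → HasDerivAt f (f' t) t) →
      (∀ t, 0 ≤ t → f' t ≤ 0) → AntitoneOn f (Ici 0) := by
    intro f f' hf hf0
    apply antitoneOn_of_deriv_nonpos (convex_Ici 0)
    · intro t ht
      exact (hf t ht).continuousAt.continuousWithinAt
    · intro t ht
      rw [interior_Ici] at ht
      exact (hf t ht.le).differentiableAt.differentiableWithinAt
    · intro t ht
      rw [interior_Ici] at ht
      rw [(hf t ht.le).deriv]
      exact hf0 t ht.le
  have hDanti : AntitoneOn D (Ici 0) :=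
    anti D (fun t => -2 * h (x t)) hDderiv (fun t ht => by
      show -2 * h (x t) ≤ 0
      have := hhnn (x t); linarith)
  -- the limit of D
  set Dt : ℝ → ℝ := fun t => D (max t 0) with hDt
  have hDtanti : Antitone Dt := by
    intro s t hst
    exact hDanti (mem_Ici.mpr (le_max_right s 0)) (mem_Ici.mpr (le_max_right t 0))
      (max_le_max hst le_rfl)
  have hbdd : BddBelow (range Dt) := ⟨0, by rintro _ ⟨t, rfl⟩; exact hDnn _⟩
  set c := ⨅ t, Dt t with hc
  have hDtto : Tendsto Dt atTop (𝓝 c) := tendsto_atTop_ciInf hDtanti hbdd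
  have hc0 : 0 ≤ c := le_ciInf fun t => hDnn _
  have hcle : ∀ t, 0 ≤ t → c ≤ D t := by
    intro t ht
    simpa [hDt, max_eq_left ht] using ciInf_le hbdd t
  -- the limit is zero
  have hceq : c = 0 := by
    by_contra hcne
    have hcpos : 0 < c := lt_of_le_of_ne hc0 (Ne.symm hcne)
    set K : Set (EuclideanSpace ℝ (Fin n)) :=
      {y | ⟪y - x₀, y - x₀⟫ ≤ D 0 ∧ c ≤ ⟪y - x₀, y - x₀⟫} with hK
    have hco : Continuous fun y : EuclideanSpace ℝ (Fin n) => ⟪y - x₀, y - x₀⟫ :=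
      (continuous_id.sub continuous_const).inner (continuous_id.sub continuous_const)
    have hKclosed : IsClosed K :=
      (isClosed_le hco continuous_const).inter (isClosed_le continuous_const hco)
    have hKsub : K ⊆ Metric.closedBall x₀ (Real.sqrt (D 0)) := by
      intro y hy
      rw [Metric.mem_closedBall, dist_eq_norm]
      have h1 : ‖y - x₀‖ ^ 2 ≤ D 0 := by
        rw [← real_inner_self_eq_norm_sq]; exact hy.1
      nlinarith [Real.sq_sqrt (hDnn 0), Real.sqrt_nonneg (D 0), norm_nonneg (y - x₀)]
    have hKcpt : IsCompact K :=
      (isCompact_closedBall x₀ _).of_isClosed_subset hKclosed hKsub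
    have hKne : K.Nonempty := ⟨x 0, le_rfl, hcle 0 le_rfl⟩
    obtain ⟨y₀, hy₀K, hy₀min⟩ := hKcpt.exists_isMinOn hKne hhcont.continuousOn
    have hy₀ne : y₀ ≠ x₀ := by
      intro hcontra
      have h2 := hy₀K.2
      rw [hcontra] at h2
      simp at h2
      linarith
    have hεpos : 0 < h y₀ := mono y₀ hy₀ne
    have hmem : ∀ t, 0 ≤ t → x t ∈ K := by
      intro t ht
      exact ⟨hDanti self_mem_Ici (mem_Ici.mpr ht) ht, hcle t ht⟩
    set G : ℝ → ℝ := fun t => D t + 2 * h y₀ * t with hG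
    have hGderiv : ∀ t, 0 ≤ t → HasDerivAt G (-2 * h (x t) + 2 * h y₀) t := by
      intro t ht
      have := (hDderiv t ht).add ((hasDerivAt_id t).const_mul (2 * h y₀))
      exact this.congr_deriv (by ring)
    have hGanti : AntitoneOn G (Ici 0) := by
      apply anti G _ hGderiv
      intro t ht
      have := isMinOn_iff.mp hy₀min _ (hmem t ht)
      linarith
    set T : ℝ := D 0 / (2 * h y₀) + 1 with hT
    have hTpos : (0 : ℝ) ≤ T := by
      have := hDnn 0
      positivity
    have hGT : D T + 2 * h y₀ * T ≤ D 0 + 2 * h y₀ * 0 :=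
      hGanti self_mem_Ici (mem_Ici.mpr hTpos) hTpos
    have h2T : 2 * h y₀ * T = D 0 + 2 * h y₀ := by
      rw [hT, mul_add, mul_one]
      congr 1
      field_simp [hεpos.ne']
    have hDT := hDnn T
    rw [h2T] at hGT
    linarith
  have hDto : Tendsto D atTop (𝓝 0) := by
    rw [← hceq]
    apply hDtto.congr'
    filter_upwards [eventually_ge_atTop (0 : ℝ)] with t ht
    simp [hDt, max_eq_left ht]
  -- conclude
  rw [tendsto_iff_norm_sub_tendsto_zero]
  have hsq : Tendsto (fun t => Real.sqrt (D t)) atTop (𝓝 0) := by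
    have := (Real.continuous_sqrt.tendsto 0).comp hDto
    simpa [Function.comp_def] using this
  apply hsq.congr
  intro t
  rw [hDdef]
  simp only
  rw [real_inner_self_eq_norm_sq, Real.sqrt_sq (norm_nonneg _)]
end
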